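/- Let P be a B-partition of a standard Borel probability space (J,B,π) with the re-randomizing property, and let f : J → ℝ be integrable with f(x) = 0 whenever P_x is infinite and Σ_{x∈P'} f(x) = 0 for every finite class P' ∈ P. Then ∫_J f dπ = 0. -/

import Mathlib

open MeasureTheory

/-- The class of the partition (setoid) `s` containing `x`. -/
def Setoid.cls {J : Type*} (s : Setoid J) (x : J) : Set J := {y | s.r x y}

/-- The saturation of a set `A`: the union of all classes of `s` meeting `A`. -/
def Setoid.sat {J : Type*} (s : Setoid J) (A : Set J) : Set J := {x | ∃ y ∈ A, s.r x y}

/-- A partition is a `B`-partition if the saturation of every Borel (measurable) set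
is Borel (measurable). -/
def IsBPartition {J : Type*} [MeasurableSpace J] (s : Setoid J) : Prop :=
  ∀ A : Set J, MeasurableSet A → MeasurableSet (s.sat A)

open scoped Classical

/-- The probability that, picking a `π`-random point and re-randomizing it along `s`
(i.e. replacing it by a uniform random point of its class when that class is finite,
keeping it otherwise), the resulting point lies in `A`. -/
noncomputable def rerandProb {J : Type*} [MeasurableSpace J] (s : Setoid J)
    (π : MeasureTheory.Measure J) (A : Set J) : ℝ :=
  ∫ x, (if (s.cls x).Finite then (Nat.card ↥(s.cls x ∩ A) : ℝ) / (Nat.card ↥(s.cls x))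
        else A.indicator 1 x) ∂π

/-- A partition `s` has the re-randomizing property with respect to `π` if re-randomizing
a `π`-random point along `s` again yields a point distributed according to `π`. -/
def HasRerand {J : Type*} [MeasurableSpace J] (s : Setoid J)
    (π : MeasureTheory.Measure J) : Prop :=
  ∀ A : Set J, MeasurableSet A → rerandProb s π A = (π A).toReal

section Aux

open Filter Topology
open scoped ENNReal NNReal

variable {J : Type*} (P : Setoid J)

lemma mem_cls_self (x : J) : x ∈ P.cls x := P.refl x

/-- The averaging operator over classes. -/
noncomputable def Tavg (g : J → ℝ) (x : J) : ℝ :=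
  if h : (P.cls x).Finite then (∑ y ∈ h.toFinset, g y) / (Nat.card ↥(P.cls x)) else g x

/-- The integrand in `rerandProb`. -/
noncomputable def gA (A : Set J) (x : J) : ℝ :=
  if (P.cls x).Finite then (Nat.card ↥(P.cls x ∩ A) : ℝ) / (Nat.card ↥(P.cls x))
  else A.indicator 1 x

lemma rerandProb_eq {_ : MeasurableSpace J} (π : Measure J) (A : Set J) :
    rerandProb P π A = ∫ x, gA P A x ∂π := rfl

lemma cls_card_pos (x : J) (h : (P.cls x).Finite) : 0 < (Nat.card ↥(P.cls x) : ℝ) := by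
  have : Finite ↥(P.cls x) := h.to_subtype
  have : Nonempty ↥(P.cls x) := ⟨⟨x, mem_cls_self P x⟩⟩
  exact_mod_cast Nat.card_pos

lemma Tavg_add (g g' : J → ℝ) (x : J) :
    Tavg P (g + g') x = Tavg P g x + Tavg P g' x := by
  unfold Tavg
  split_ifs with h
  · rw [← add_div]; congr 1; exact Finset.sum_add_distrib
  · rfl

lemma Tavg_sub (g g' : J → ℝ) (x : J) :
    Tavg P (g - g') x = Tavg P g x - Tavg P g' x := by
  unfold Tavg
  split_ifs with h
  · rw [← sub_div]; congr 1; exact Finset.sum_sub_distrib g g'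
  · rfl

lemma Tavg_mono {g g' : J → ℝ} (hle : ∀ x, g x ≤ g' x) (x : J) :
    Tavg P g x ≤ Tavg P g' x := by
  unfold Tavg
  split_ifs with h
  · exact div_le_div_of_nonneg_right (Finset.sum_le_sum fun y _ => hle y) (cls_card_pos P x h).le
  · exact hle x

lemma Tavg_nonneg {g : J → ℝ} (hg : ∀ x, 0 ≤ g x) (x : J) : 0 ≤ Tavg P g x := by
  have := Tavg_mono P (g := fun _ => 0) (g' := g) hg x
  simpa [Tavg] using this

lemma Tavg_indicator (A : Set J) (c : ℝ) (x : J) :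
    Tavg P (A.indicator fun _ => c) x = c * gA P A x := by
  unfold Tavg gA
  split_ifs with h
  · have hfin : (P.cls x ∩ A).Finite := h.inter_of_left A
    have hcard : (Nat.card ↥(P.cls x ∩ A) : ℝ) = (hfin.toFinset.card : ℝ) := by
      rw [Nat.card_coe_set_eq, Set.ncard_eq_toFinset_card _ hfin]
    have hsum : ∑ y ∈ h.toFinset, (A.indicator fun _ => c) y = c * hfin.toFinset.card := by
      rw [Finset.sum_indicator_eq_sum_filter]
      have : h.toFinset.filter (· ∈ A) = hfin.toFinset := by
        ext y; simp [Set.mem_inter_iff, and_comm]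
      rw [this, Finset.sum_const, nsmul_eq_mul, mul_comm]
    rw [hsum, hcard, mul_div_assoc]
  · simp [Set.indicator_apply]

lemma gA_nonneg (A : Set J) (x : J) : 0 ≤ gA P A x := by
  unfold gA
  split_ifs with h
  · positivity
  · exact Set.indicator_nonneg (fun _ _ => zero_le_one) x

lemma gA_add_compl (A : Set J) (x : J) : gA P A x + gA P Aᶜ x = 1 := by
  unfold gA
  split_ifs with h
  · have hc := cls_card_pos P x h
    have hA : (P.cls x ∩ A).Finite := h.inter_of_left A
    have hA' : (P.cls x ∩ Aᶜ).Finite := h.inter_of_left Aᶜ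
    have hcardsum : (Nat.card ↥(P.cls x ∩ A) : ℝ) + (Nat.card ↥(P.cls x ∩ Aᶜ) : ℝ)
        = (Nat.card ↥(P.cls x) : ℝ) := by
      rw [Nat.card_coe_set_eq, Set.ncard_eq_toFinset_card _ hA, Nat.card_coe_set_eq,
        Set.ncard_eq_toFinset_card _ hA', Nat.card_coe_set_eq, Set.ncard_eq_toFinset_card _ h]
      have h1 : hA.toFinset = h.toFinset.filter (· ∈ A) := by
        ext y; simp [and_comm]
      have h2 : hA'.toFinset = h.toFinset.filter (¬ · ∈ A) := by
        ext y; simp [and_comm]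
      rw [h1, h2]
      exact_mod_cast congrArg (Nat.cast (R := ℝ)) (Finset.card_filter_add_card_filter_not _)
    rw [← add_div, hcardsum, div_self hc.ne']
  · by_cases hx : x ∈ A <;> simp [Set.indicator_apply, hx]

variable {mJ : MeasurableSpace J} (π : Measure J) [IsProbabilityMeasure π]

lemma gA_spec (hre : HasRerand P π) {A : Set J} (hA : MeasurableSet A) :
    Integrable (gA P A) π ∧ ∫ x, gA P A x ∂π = (π A).toReal := by
  have key : ∀ B : Set J, MeasurableSet B → π B ≠ 0 →
      Integrable (gA P B) π ∧ ∫ x, gA P B x ∂π = (π B).toReal := by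
    intro B hB hB0
    have hint : Integrable (gA P B) π := by
      by_contra hni
      have h1 := hre B hB
      rw [rerandProb_eq, integral_undef hni] at h1
      have h2 := (ENNReal.toReal_eq_zero_iff _).1 h1.symm
      rcases h2 with h2 | h2
      · exact hB0 h2
      · exact measure_ne_top π B h2
    exact ⟨hint, (rerandProb_eq P π B) ▸ hre B hB⟩
  by_cases hA0 : π A = 0
  · have hAc : π Aᶜ ≠ 0 := by
      rw [measure_compl hA (measure_ne_top π A), hA0, measure_univ]
      simp
    obtain ⟨hi, hv⟩ := key Aᶜ hA.compl hAc
    have heq : gA P A = fun x => 1 - gA P Aᶜ x := by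
      funext x; have := gA_add_compl P A x; linarith
    constructor
    · rw [heq]; exact (integrable_const 1).sub hi
    · rw [heq, integral_sub (integrable_const 1) hi, hv, integral_const,
        measure_compl hA (measure_ne_top π A), measure_univ, hA0]
      simp
  · exact key A hA hA0

lemma Tavg_simpleFunc (hre : HasRerand P π) (s : SimpleFunc J ℝ) :
    Integrable (Tavg P s) π ∧ ∫ x, Tavg P s x ∂π = ∫ x, s x ∂π := by
  induction s using SimpleFunc.induction with
  | @const c A hA =>
    have hco : ⇑(SimpleFunc.piecewise A hA (SimpleFunc.const J c) (SimpleFunc.const J 0))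
        = A.indicator fun _ => c := by
      funext x
      simp [SimpleFunc.coe_piecewise, Set.piecewise, Set.indicator_apply]
    rw [hco]
    have hT : Tavg P (A.indicator fun _ => c) = fun x => c * gA P A x :=
      funext fun x => Tavg_indicator P A c x
    obtain ⟨hi, hv⟩ := gA_spec P π hre hA
    constructor
    · rw [hT]; exact hi.const_mul c
    · rw [hT, integral_const_mul, hv, integral_indicator_const _ hA]
      simp [mul_comm, Measure.real]
  | @add s₁ s₂ _ ih₁ ih₂ =>
    have hco : ⇑(s₁ + s₂) = ⇑s₁ + ⇑s₂ := by funext x; simp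
    have hT : Tavg P ⇑(s₁ + s₂) = fun x => Tavg P s₁ x + Tavg P s₂ x := by
      funext x; rw [hco]; exact Tavg_add P s₁ s₂ x
    constructor
    · rw [hT]; exact ih₁.1.add ih₂.1
    · rw [hT, integral_add ih₁.1 ih₂.1, ih₁.2, ih₂.2, hco,
        integral_add' (SimpleFunc.integrable_of_isFiniteMeasure s₁)
          (SimpleFunc.integrable_of_isFiniteMeasure s₂)]

lemma Tavg_nonneg_meas (hre : HasRerand P π) {h : J → ℝ}
    (hm : Measurable h) (hpos : ∀ x, 0 ≤ h x) (hi : Integrable h π) :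
    Integrable (Tavg P h) π ∧ ∫ x, Tavg P h x ∂π = ∫ x, h x ∂π := by
  set g : J → ℝ≥0∞ := fun x => ENNReal.ofReal (h x) with hg
  have hgm : Measurable g := ENNReal.measurable_ofReal.comp hm
  set t : ℕ → SimpleFunc J ℝ := fun n => (SimpleFunc.eapprox g n).map ENNReal.toReal with ht
  have ht_apply : ∀ n x, t n x = (SimpleFunc.eapprox g n x).toReal := fun n x => rfl
  have ht_nonneg : ∀ n x, 0 ≤ t n x := fun n x => ENNReal.toReal_nonneg
  have ht_mono : ∀ x, Monotone fun n => t n x := by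
    intro x m n hmn
    simp only [ht_apply]
    exact ENNReal.toReal_mono (SimpleFunc.eapprox_lt_top g n x).ne
      (SimpleFunc.monotone_eapprox g hmn x)
  have ht_tendsto : ∀ x, Tendsto (fun n => t n x) atTop (𝓝 (h x)) := by
    intro x
    have h1 : Tendsto (fun n => SimpleFunc.eapprox g n x) atTop (𝓝 (g x)) := by
      rw [← SimpleFunc.iSup_eapprox_apply hgm x]
      exact tendsto_atTop_iSup fun m n hmn => SimpleFunc.monotone_eapprox g hmn x
    have h2 : Tendsto ENNReal.toReal (𝓝 (g x)) (𝓝 (g x).toReal) :=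
      ENNReal.tendsto_toReal (by simp [hg])
    have := h2.comp h1
    simpa [hg, ENNReal.toReal_ofReal (hpos x), ht_apply, Function.comp_def] using this
  have hTt := fun n => Tavg_simpleFunc P π hre (t n)
  have hTmono : ∀ x, Monotone fun n => Tavg P (t n) x := fun x m n hmn =>
    Tavg_mono P (fun y => ht_mono y hmn) x
  have hTtendsto : ∀ x, Tendsto (fun n => Tavg P (t n) x) atTop (𝓝 (Tavg P h x)) := by
    intro x
    unfold Tavg
    split_ifs with hfin
    · exact (tendsto_finset_sum _ fun y _ => ht_tendsto y).div_const _
    · exact ht_tendsto x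
  -- a.e. strong measurability of the limit
  have hTh_meas : AEStronglyMeasurable (Tavg P h) π :=
    aestronglyMeasurable_of_tendsto_ae atTop (fun n => (hTt n).1.aestronglyMeasurable)
      (Filter.Eventually.of_forall hTtendsto)
  -- MCT for T t n
  have hmct1 : Tendsto (fun n => ∫⁻ x, ENNReal.ofReal (Tavg P (t n) x) ∂π) atTop
      (𝓝 (∫⁻ x, ENNReal.ofReal (Tavg P h x) ∂π)) := by
    apply lintegral_tendsto_of_tendsto_of_monotone
    · exact fun n => (hTt n).1.aestronglyMeasurable.aemeasurable.ennreal_ofReal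
    · exact Filter.Eventually.of_forall fun x m n hmn =>
        ENNReal.ofReal_le_ofReal (hTmono x hmn)
    · exact Filter.Eventually.of_forall fun x =>
        (ENNReal.continuous_ofReal.tendsto _).comp (hTtendsto x)
  -- MCT for t n
  have hmct2 : Tendsto (fun n => ∫⁻ x, ENNReal.ofReal (t n x) ∂π) atTop
      (𝓝 (∫⁻ x, ENNReal.ofReal (h x) ∂π)) := by
    apply lintegral_tendsto_of_tendsto_of_monotone
    · exact fun n => ((t n).measurable.aemeasurable).ennreal_ofReal
    · exact Filter.Eventually.of_forall fun x m n hmn =>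
        ENNReal.ofReal_le_ofReal (ht_mono x hmn)
    · exact Filter.Eventually.of_forall fun x =>
        (ENNReal.continuous_ofReal.tendsto _).comp (ht_tendsto x)
  have heqn : ∀ n, ∫⁻ x, ENNReal.ofReal (Tavg P (t n) x) ∂π
      = ∫⁻ x, ENNReal.ofReal (t n x) ∂π := by
    intro n
    rw [← ofReal_integral_eq_lintegral_ofReal (hTt n).1
        (Filter.Eventually.of_forall fun x => Tavg_nonneg P (ht_nonneg n) x),
      ← ofReal_integral_eq_lintegral_ofReal (SimpleFunc.integrable_of_isFiniteMeasure (t n))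
        (Filter.Eventually.of_forall (ht_nonneg n)), (hTt n).2]
  have hlint_eq : ∫⁻ x, ENNReal.ofReal (Tavg P h x) ∂π = ∫⁻ x, ENNReal.ofReal (h x) ∂π := by
    have := hmct1
    simp_rw [heqn] at this
    exact tendsto_nhds_unique this hmct2
  have hlint_lt : ∫⁻ x, ENNReal.ofReal (h x) ∂π < ⊤ := by
    rw [← ofReal_integral_eq_lintegral_ofReal hi (Filter.Eventually.of_forall hpos)]
    exact ENNReal.ofReal_lt_top
  have hTh_nonneg : ∀ x, 0 ≤ Tavg P h x := Tavg_nonneg P hpos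
  have hTh_int : Integrable (Tavg P h) π := by
    refine ⟨hTh_meas, ?_⟩
    rw [hasFiniteIntegral_iff_norm]
    have : ∀ x, ENNReal.ofReal ‖Tavg P h x‖ = ENNReal.ofReal (Tavg P h x) := fun x => by
      rw [Real.norm_of_nonneg (hTh_nonneg x)]
    simp_rw [this, hlint_eq]
    exact hlint_lt
  refine ⟨hTh_int, ?_⟩
  rw [integral_eq_lintegral_of_nonneg_ae (Filter.Eventually.of_forall hTh_nonneg) hTh_meas,
    integral_eq_lintegral_of_nonneg_ae (Filter.Eventually.of_forall hpos)
      hi.aestronglyMeasurable, hlint_eq]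

end Aux

/-- If `P` is a `B`-partition with the re-randomizing property and `f` is
an integrable function vanishing on infinite classes and summing to zero on every finite
class, then `∫ f dπ = 0`. -/
theorem integral_eq_zero_of_class_sums_zero {J : Type*} [MeasurableSpace J]
    [StandardBorelSpace J] (π : MeasureTheory.Measure J) [IsProbabilityMeasure π]
    (P : Setoid J) (hP : IsBPartition P) (hre : HasRerand P π)
    (f : J → ℝ) (hf : Integrable f π)
    (h0 : ∀ x : J, (P.cls x).Infinite → f x = 0)
    (hsum : ∀ x : J, ∀ h : (P.cls x).Finite, ∑ y ∈ h.toFinset, f y = 0) :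
    ∫ x, f x ∂π = 0 := by
  -- measurable modification of f
  set f' : J → ℝ := hf.1.mk f with hf'def
  have hmeas : Measurable f' := hf.1.measurable_mk
  have hae : f =ᵐ[π] f' := hf.1.ae_eq_mk
  have hf' : Integrable f' π := hf.congr hae
  -- positive and negative parts
  set p : J → ℝ := fun x => max (f' x) 0 with hp
  set q : J → ℝ := fun x => max (-f' x) 0 with hq
  have hpm : Measurable p := hmeas.max measurable_const
  have hqm : Measurable q := hmeas.neg.max measurable_const
  have hpi : Integrable p π := hf'.pos_part
  have hqi : Integrable q π := hf'.neg.pos_part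
  have hpq : f' = p - q := by
    funext x; simp [hp, hq, max_zero_sub_max_neg_zero_eq_self]
  obtain ⟨hTp_int, hTp⟩ := Tavg_nonneg_meas P π hre hpm (fun x => le_max_right _ _) hpi
  obtain ⟨hTq_int, hTq⟩ := Tavg_nonneg_meas P π hre hqm (fun x => le_max_right _ _) hqi
  have hTf' : ∀ x, Tavg P f' x = Tavg P p x - Tavg P q x := by
    intro x; rw [hpq]; exact Tavg_sub P p q x
  have hTf'_int : Integrable (Tavg P f') π := by
    have : Tavg P f' = fun x => Tavg P p x - Tavg P q x := funext hTf'
    rw [this]; exact hTp_int.sub hTq_int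
  have hTf'_val : ∫ x, Tavg P f' x ∂π = ∫ x, f' x ∂π := by
    have h1 : Tavg P f' = fun x => Tavg P p x - Tavg P q x := funext hTf'
    rw [h1, integral_sub hTp_int hTq_int, hTp, hTq, hpq, integral_sub' hpi hqi]
  -- the exceptional null set
  have hNnull : π {x | f x ≠ f' x} = 0 := ae_iff.1 hae
  obtain ⟨N, hNsub, hNmeas, hN0⟩ := exists_measurable_superset_of_null hNnull
  obtain ⟨hgN_int, hgN_val⟩ := gA_spec P π hre hNmeas
  have hgN_zero : gA P N =ᵐ[π] 0 := by
    rw [← integral_eq_zero_iff_of_nonneg (gA_nonneg P N) hgN_int]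
    rw [hgN_val, hN0]; simp
  have hae2 : Tavg P f =ᵐ[π] Tavg P f' := by
    filter_upwards [hgN_zero] with x hx
    have hfN : ∀ y, y ∉ N → f y = f' y := fun y hy =>
      not_not.1 fun hne => hy (hNsub hne)
    unfold Tavg
    split_ifs with hfin
    · -- show cls x ∩ N = ∅
      have hgx : gA P N x = 0 := hx
      unfold gA at hgx
      rw [if_pos hfin] at hgx
      have hc := cls_card_pos P x hfin
      have hcard0 : (Nat.card ↥(P.cls x ∩ N) : ℝ) = 0 :=
        (div_eq_zero_iff.1 hgx).resolve_right hc.ne'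
      have hfinN : (P.cls x ∩ N).Finite := hfin.inter_of_left N
      have hempty : P.cls x ∩ N = ∅ := by
        have hnc : (P.cls x ∩ N).ncard = 0 := by
          have : Nat.card ↥(P.cls x ∩ N) = 0 := by exact_mod_cast hcard0
          rwa [Nat.card_coe_set_eq] at this
        exact (Set.ncard_eq_zero hfinN).1 hnc
      refine congrArg (· / (Nat.card ↥(P.cls x) : ℝ)) ?_
      apply Finset.sum_congr rfl
      intro y hy
      apply hfN
      intro hyN
      exact absurd (Set.mem_inter (hfin.mem_toFinset.1 hy) hyN) (by rw [hempty]; simp)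
    · -- infinite class: x ∉ N
      have hgx : gA P N x = 0 := hx
      unfold gA at hgx
      rw [if_neg hfin] at hgx
      have hxN : x ∉ N := by
        intro hxN
        rw [Set.indicator_of_mem hxN] at hgx
        norm_num at hgx
      exact hfN x hxN
  have hTf_zero : ∀ x, Tavg P f x = 0 := by
    intro x
    unfold Tavg
    split_ifs with hfin
    · rw [hsum x hfin, zero_div]
    · exact h0 x hfin
  have : ∫ x, f' x ∂π = 0 := by
    rw [← hTf'_val, ← integral_congr_ae hae2]
    simp [funext hTf_zero]
  rw [integral_congr_ae hae, this]
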